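/- Let P be a [0,1]-valued random variable with CDF F satisfying F(τx) ≤ x·F(τ) for all x, τ ∈ [0,1]. Then for any constants 0 < α ≤ λ < τ ≤ 1 with F(τ) > 0: P(P ≤ α) ≤ (α/τ)·F(τ) ≤ (α/(τ−λ))·P(λ < P ≤ τ). -/
import Mathlib


open MeasureTheory ProbabilityTheory

/-- Single-hypothesis core of the ADDIS mFDR proof: for a uniformly conservative
p-value `P` with CDF `F` and constants `0 < α ≤ λ < τ ≤ 1` with `F τ > 0`,
`P(P ≤ α) ≤ (α/τ)·F(τ) ≤ (α/(τ−λ))·P(λ < P ≤ τ)`. -/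
theorem stmt_9 {Ω : Type*} [MeasureSpace Ω] [IsProbabilityMeasure (ℙ : Measure Ω)]
    (P : Ω → ℝ) (hP : Measurable P) (hrange : ∀ ω, P ω ∈ Set.Icc (0:ℝ) 1)
    (F : ℝ → ℝ) (hF : ∀ t, F t = (ℙ {ω | P ω ≤ t}).toReal)
    (hcons : ∀ x ∈ Set.Icc (0:ℝ) 1, ∀ τ ∈ Set.Icc (0:ℝ) 1, F (τ * x) ≤ x * F τ)
    (α lam τ : ℝ) (hα : 0 < α) (hαlam : α ≤ lam) (hlamτ : lam < τ) (hτ : τ ≤ 1)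
    (hFτ : 0 < F τ) :
    (ℙ {ω | P ω ≤ α}).toReal ≤ (α / τ) * F τ ∧
      (α / τ) * F τ ≤ (α / (τ - lam)) * (ℙ {ω | lam < P ω ∧ P ω ≤ τ}).toReal := by
  have hτ0 : 0 < τ := lt_of_le_of_lt (le_trans hα.le hαlam) hlamτ
  have hlam0 : 0 < lam := lt_of_lt_of_le hα hαlam
  have hτmem : τ ∈ Set.Icc (0:ℝ) 1 := ⟨hτ0.le, hτ⟩
  have hατ : α ≤ τ := le_trans hαlam hlamτ.le
  have hFα : F α ≤ (α / τ) * F τ := by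
    have := hcons (α / τ) ⟨by positivity, by
      rw [div_le_one hτ0]; exact hατ⟩ τ hτmem
    rwa [mul_div_cancel₀ α hτ0.ne'] at this
  have hFlam : F lam ≤ (lam / τ) * F τ := by
    have := hcons (lam / τ) ⟨by positivity, by
      rw [div_le_one hτ0]; exact hlamτ.le⟩ τ hτmem
    rwa [mul_div_cancel₀ lam hτ0.ne'] at this
  constructor
  · rw [← hF α]; exact hFα
  · -- measure of the slab equals F τ - F lam
    have hset : {ω | lam < P ω ∧ P ω ≤ τ} = {ω | P ω ≤ τ} \ {ω | P ω ≤ lam} := by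
      ext ω; simp [Set.mem_diff, and_comm, not_le]
    have hsub : {ω | P ω ≤ lam} ⊆ {ω | P ω ≤ τ} := fun ω h => le_trans h hlamτ.le
    have hmeas : MeasurableSet {ω | P ω ≤ lam} := hP measurableSet_Iic
    have hdiff : (ℙ {ω | lam < P ω ∧ P ω ≤ τ}).toReal = F τ - F lam := by
      rw [hset, measure_diff hsub (hmeas.nullMeasurableSet) (measure_ne_top _ _),
        ENNReal.toReal_sub_of_le (measure_mono hsub) (measure_ne_top _ _), hF, hF]
    rw [hdiff]
    have hτl : 0 < τ - lam := sub_pos.2 hlamτ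
    have h1 : F lam * τ ≤ lam * F τ := by
      have := mul_le_mul_of_nonneg_right hFlam hτ0.le
      field_simp at this
      linarith
    rw [div_mul_eq_mul_div, div_mul_eq_mul_div, div_le_div_iff₀ hτ0 hτl]
    nlinarith [mul_le_mul_of_nonneg_left h1 hα.le]
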